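/- For all 1 ≤ n, m ≤ N, the commutation identity ∇ₙ ∘ Δₘ = (Δₘ + 4·δ_{nm}·id_A) ∘ ∇ₙ holds; that is, ∇ₙ(Δₘ(x)) = Δₘ(∇ₙ(x)) + 4·δ_{nm}·∇ₙ(x) for every x ∈ A. -/
import Mathlib


/-- In the setting of the differential dynamics of the `D n`,
with `∇ₙ x = i (D n * x - φ x * D n)`, `∇ₙ† x = -i (D n * x + φ x * D n)` and
`Δₘ = ∇ₘ† ∘ ∇ₘ`, the commutation identity
`∇ₙ ∘ Δₘ = (Δₘ + 4 δ_{nm} id) ∘ ∇ₙ` holds, i.e.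
`∇ₙ (Δₘ x) = Δₘ (∇ₙ x) + 4 δ_{nm} ∇ₙ x` for every `x ∈ A`. -/
theorem stmt_3 {A : Type*} [Ring A] [Algebra ℂ A]
    (φ : A →ₐ[ℂ] A) (hφ : ∀ x, φ (φ x) = x)
    {N : ℕ} (D : Fin N → A)
    (hDneg : ∀ n, φ (D n) = - D n)
    (hDanti : ∀ n m, D n * D m + D m * D n = (if n = m then (2 : ℂ) else 0) • (1 : A))
    (grad : Fin N → A →ₗ[ℂ] A)
    (hgrad : ∀ n x, grad n x = Complex.I • (D n * x - φ x * D n))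
    (gradAdj : Fin N → A →ₗ[ℂ] A)
    (hgradAdj : ∀ n x, gradAdj n x = (-Complex.I) • (D n * x + φ x * D n)) :
    ∀ n m : Fin N, ∀ x : A,
      grad n (gradAdj m (grad m x)) =
        gradAdj m (grad m (grad n x)) + (if n = m then (4 : ℂ) else 0) • grad n x := by
  intro n m x
  have he : D m * D m = 1 := by
    have h := hDanti m m
    rw [if_pos rfl] at h
    have h2 : (2:ℂ) • (D m * D m) = (2:ℂ) • (1:A) := by
      rw [two_smul]; exact h
    exact smul_right_injective A two_ne_zero h2
  have hDelta : ∀ z, gradAdj m (grad m z) =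
      (2:ℂ) • z - (2:ℂ) • (D m * (φ z * D m)) := by
    intro z
    rw [hgrad, map_smul, hgradAdj]
    simp only [map_sub, map_mul, hφ, hDneg, smul_smul, neg_mul, mul_neg, neg_neg,
      neg_smul, Complex.I_mul_I, neg_neg, one_smul]
    have hneg1 : ∀ w : A, -((-1 : ℂ) • w) = w := fun w => by rw [neg_smul, one_smul, neg_neg]
    rw [smul_neg, smul_smul, Complex.I_mul_I, hneg1]
    rw [mul_sub, ← mul_assoc (D m) (D m) z, he, one_mul, sub_mul, neg_mul, neg_mul,
      mul_assoc z, he, mul_one, mul_assoc (D m) (φ z), two_smul, two_smul]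
    abel
  rw [hDelta x, hDelta (grad n x), hgrad n]
  simp only [map_sub, map_smul, map_mul, map_add, hφ, hDneg, hgrad, smul_sub, smul_smul,
    mul_neg, neg_mul, neg_neg, smul_add, smul_neg]
  simp only [sub_mul, mul_sub, mul_smul_comm, smul_mul_assoc, smul_smul, smul_sub, smul_add,
    sub_mul, neg_mul, mul_neg, neg_neg, smul_neg]
  rcases eq_or_ne n m with rfl | hne
  · simp only [if_pos rfl, if_true]
    have e1 : D n * (D n * (φ x * D n)) = φ x * D n := by rw [← mul_assoc, he, one_mul]
    have e2 : D n * (x * D n) * D n = D n * x := by rw [mul_assoc, mul_assoc, he, mul_one]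
    have e3 : D n * (D n * φ x * D n) = φ x * D n := by
      rw [← mul_assoc, ← mul_assoc, he, one_mul]
    have e4 : D n * (x * D n * D n) = D n * x := by rw [mul_assoc x, he, mul_one]
    rw [e1, e2, e3, e4]
    module
  · simp only [if_neg hne]
    have h0 : D n * D m + D m * D n = 0 := by
      have h := hDanti n m; rwa [if_neg hne, zero_smul] at h
    have hc : D n * D m = -(D m * D n) := eq_neg_of_add_eq_zero_left h0
    have hc' : D m * D n = -(D n * D m) := eq_neg_of_add_eq_zero_right h0
    have f1 : D n * (D m * (φ x * D m)) = -(D m * (D n * φ x * D m)) := by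
      rw [← mul_assoc, hc]; noncomm_ring
    have g : x * D m * D n = -(x * D n * D m) := by rw [mul_assoc, hc']; noncomm_ring
    have f2 : D m * (x * D m) * D n = -(D m * (x * D n * D m)) := by
      rw [mul_assoc, g, mul_neg]
    rw [f1, f2]
    module
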